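/- Let |q| < 1, |ρ| < 1, and let i, j, m ≥ 0 be integers. Then for all real x, y: Q_{i,j}(x,y|ρ q^m, q) · ∏_{r=0}^{m-1} ω(x√(1-q)/2, y√(1-q)/2 | ρ q^r) = (ρ²;q)_{2m} · Σ_{k=0}^{m} (-1)^k [m choose k]_q q^{k(k-1)/2} (1-q)^k ρ^k Q_{i+k,j+k}(x,y|ρ,q). -/

import Mathlib

open Finset MeasureTheory

noncomputable section

/-- [n]_q = 1 + q + ... + q^{n-1} -/
def qNat (q : ℝ) (n : ℕ) : ℝ := ∑ j ∈ Finset.range n, q ^ j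

/-- [n]_q! -/
def qFact (q : ℝ) : ℕ → ℝ
  | 0 => 1
  | n + 1 => qFact q n * qNat q (n + 1)

/-- q-binomial coefficient -/
def qBinom (q : ℝ) (n k : ℕ) : ℝ :=
  if k ≤ n then qFact q n / (qFact q (n - k) * qFact q k) else 0

/-- q-Pochhammer symbol (a;q)_n -/
def qPoch (a q : ℝ) (n : ℕ) : ℝ := ∏ j ∈ Finset.range n, (1 - a * q ^ j)

/-- q-Pochhammer symbol (a;q)_∞ -/
def qPochInf (a q : ℝ) : ℝ := ∏' j : ℕ, (1 - a * q ^ j)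

/-- continuous q-Hermite polynomials H_n(x|q) -/
def qHermite (q : ℝ) : ℕ → ℝ → ℝ
  | 0, _ => 1
  | 1, x => x
  | n + 2, x => x * qHermite q (n + 1) x - qNat q (n + 1) * qHermite q n x

/-- big q-Hermite polynomials H_n(x|a,q) -/
def bigqHermite (q a : ℝ) : ℕ → ℝ → ℝ
  | 0, _ => 1
  | 1, x => x - a
  | n + 2, x => (x - a * q ^ (n + 1)) * bigqHermite q a (n + 1) x -
      qNat q (n + 1) * bigqHermite q a n x

/-- rescaled Al-Salam--Chihara polynomials P_n(x|y,ρ,q) -/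
def ascP (q y ρ : ℝ) : ℕ → ℝ → ℝ
  | 0, _ => 1
  | 1, x => x - ρ * y
  | n + 2, x => (x - ρ * y * q ^ (n + 1)) * ascP q y ρ (n + 1) x -
      qNat q (n + 1) * (1 - ρ ^ 2 * q ^ n) * ascP q y ρ n x

/-- generating function φ_H(x|t,q) of the q-Hermite polynomials -/
def phiH (q t x : ℝ) : ℝ := ∑' n : ℕ, t ^ n / qFact q n * qHermite q n x

/-- γ_{i,j}(x,y|ρ,q) -/
def gammaPM (q ρ : ℝ) (i j : ℕ) (x y : ℝ) : ℝ :=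
  ∑' n : ℕ, ρ ^ n / qFact q n * qHermite q (n + i) x * qHermite q (n + j) y

/-- the polynomials Q_{i,j}(x,y|ρ,q) -/
def Qpoly (q ρ : ℝ) (i j : ℕ) (x y : ℝ) : ℝ :=
  ∑ s ∈ Finset.range (j + 1),
    (-1 : ℝ) ^ s * q ^ (s * (s - 1) / 2) * qBinom q j s * ρ ^ s * qHermite q (j - s) y *
      ascP q y ρ (i + s) x / qPoch (ρ ^ 2) q (i + s)

/-- the interval S(q) = [-2/√(1-q), 2/√(1-q)] -/
def Sq (q : ℝ) : Set ℝ := Set.Icc (-(2 / Real.sqrt (1 - q))) (2 / Real.sqrt (1 - q))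

/-- ω(x,y|ρ) -/
def omegaPM (x y ρ : ℝ) : ℝ :=
  (1 - ρ ^ 2) ^ 2 - 4 * ρ * (1 + ρ ^ 2) * x * y + 4 * ρ ^ 2 * (x ^ 2 + y ^ 2)

/-- l(x|a) -/
def lPM (x a : ℝ) : ℝ := (1 + a) ^ 2 - 4 * a * x ^ 2

/-- the q-Normal density f_N(x|q) -/
def fN (q x : ℝ) : ℝ :=
  Real.sqrt ((1 - q) * (4 - (1 - q) * x ^ 2)) * qPochInf q q / (2 * Real.pi) *
    ∏' j : ℕ, lPM (x * Real.sqrt (1 - q) / 2) (q ^ (j + 1))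

/-- the (q,ρ)-Conditional Normal density f_CN(x|y,ρ,q) -/
def fCN (q ρ x y : ℝ) : ℝ :=
  fN q x * qPochInf (ρ ^ 2) q /
    ∏' j : ℕ, omegaPM (x * Real.sqrt (1 - q) / 2) (y * Real.sqrt (1 - q) / 2) (ρ * q ^ j)

/-- the (ρ,q)-bivariate Normal density f_{2D}(x,y|ρ,q) -/
def f2D (q ρ x y : ℝ) : ℝ := fCN q ρ x y * fN q y

lemma qNat_succ (q : ℝ) (n : ℕ) : qNat q (n + 1) = qNat q n + q ^ n :=
  Finset.sum_range_succ _ n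

lemma one_sub_mul_qNat (q : ℝ) (n : ℕ) : (1 - q) * qNat q n = 1 - q ^ n := by
  induction n with
  | zero => simp [qNat]
  | succ n ih => rw [qNat_succ, mul_add, ih, pow_succ]; ring

lemma qNat_pos {q : ℝ} (hq : |q| < 1) (n : ℕ) : 0 < qNat q (n + 1) := by
  have h1 : q < 1 := lt_of_le_of_lt (le_abs_self q) hq
  have h2 : q ^ (n+1) < 1 := by
    calc q ^ (n+1) ≤ |q ^ (n+1)| := le_abs_self _
    _ = |q| ^ (n+1) := by rw [abs_pow]
    _ < 1 := pow_lt_one₀ (abs_nonneg q) hq (Nat.succ_ne_zero n)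
  have := one_sub_mul_qNat q (n+1)
  nlinarith [this]

lemma qFact_pos {q : ℝ} (hq : |q| < 1) (n : ℕ) : 0 < qFact q n := by
  induction n with
  | zero => norm_num [qFact]
  | succ n ih => exact mul_pos ih (qNat_pos hq n)

lemma qNat_add (q : ℝ) (a b : ℕ) : qNat q (a + b) = qNat q a + q ^ a * qNat q b := by
  induction b with
  | zero => simp [qNat]
  | succ b ih => rw [← Nat.add_assoc, qNat_succ, ih, qNat_succ, pow_add]; ring

lemma qBinom_overflow (q : ℝ) {n k : ℕ} (h : n < k) : qBinom q n k = 0 := by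
  simp [qBinom, Nat.not_le.mpr h]

lemma qBinom_zero {q : ℝ} (hq : |q| < 1) (n : ℕ) : qBinom q n 0 = 1 := by
  simp [qBinom, qFact, (qFact_pos hq n).ne']

lemma qBinom_self {q : ℝ} (hq : |q| < 1) (n : ℕ) : qBinom q n n = 1 := by
  simp only [qBinom, if_pos (Nat.le_refl n), Nat.sub_self]
  rw [show qFact q 0 = 1 from rfl]
  rw [one_mul, div_self (qFact_pos hq n).ne']

lemma qPascal {q : ℝ} (hq : |q| < 1) (j s : ℕ) :
    qBinom q (j + 1) (s + 1) = q ^ (s + 1) * qBinom q j (s + 1) + qBinom q j s := by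
  rcases lt_or_ge j s with h | h
  · rw [qBinom_overflow q (by omega : j + 1 < s + 1), qBinom_overflow q (by omega : j < s + 1),
      qBinom_overflow q h]
    ring
  · rcases eq_or_lt_of_le h with h' | h'
    · subst h'
      rw [qBinom_overflow q (Nat.lt_succ_self s), qBinom_self hq, qBinom_self hq]
      ring
    · have hs1 : s + 1 ≤ j := h'
      have e1 : j + 1 - (s + 1) = j - s := by omega
      have e2 : j - (s + 1) = j - s - 1 := by omega
      simp only [qBinom, if_pos (by omega : s + 1 ≤ j + 1), if_pos hs1, if_pos h, e1, e2]
      have e3 : qFact q (j - s) = qFact q (j - s - 1) * qNat q (j - s) := by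
        obtain ⟨t, ht⟩ := Nat.exists_eq_add_of_le (by omega : 1 ≤ j - s)
        rw [ht]; simp only [Nat.add_sub_cancel_left]
        rw [Nat.add_comm 1 t]; rfl
      have e4 : qFact q (j + 1) = qFact q j * qNat q (j + 1) := rfl
      have e5 : qFact q (s + 1) = qFact q s * qNat q (s + 1) := rfl
      have e6 : qNat q (j + 1) = qNat q (s + 1) + q ^ (s + 1) * qNat q (j - s) := by
        rw [← qNat_add q (s + 1) (j - s)]; congr 1; omega
      have h2 := (qFact_pos hq (j - s - 1)).ne'
      have h3 := (qFact_pos hq s).ne'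
      have h5 := (qFact_pos hq j).ne'
      have h6 : qNat q (s + 1) ≠ 0 := (qNat_pos hq s).ne'
      have h8 : qNat q (j - s) ≠ 0 := by
        have := (qNat_pos hq (j - s - 1)).ne'
        rwa [show j - s - 1 + 1 = j - s by omega] at this
      rw [e4, e5, e6, e3]
      field_simp
      ring

lemma qBinom_mul {q : ℝ} (hq : |q| < 1) (j s : ℕ) :
    qBinom q j (s + 1) * qNat q (s + 1) = qBinom q j s * qNat q (j - s) := by
  rcases lt_or_ge j s with h | h
  · rw [qBinom_overflow q (by omega : j < s + 1), qBinom_overflow q h]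
    have : j - s = 0 := by omega
    rw [this]
    simp [qNat]
  · rcases eq_or_lt_of_le h with h' | h'
    · subst h'
      rw [qBinom_overflow q (Nat.lt_succ_self s), Nat.sub_self]
      simp [qNat]
    · have hs1 : s + 1 ≤ j := h'
      have e2 : j - (s + 1) = j - s - 1 := by omega
      simp only [qBinom, if_pos hs1, if_pos h, e2]
      have e3 : qFact q (j - s) = qFact q (j - s - 1) * qNat q (j - s) := by
        obtain ⟨t, ht⟩ := Nat.exists_eq_add_of_le (by omega : 1 ≤ j - s)
        rw [ht]; simp only [Nat.add_sub_cancel_left]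
        rw [Nat.add_comm 1 t]; rfl
      have e5 : qFact q (s + 1) = qFact q s * qNat q (s + 1) := rfl
      have h2 := (qFact_pos hq (j - s - 1)).ne'
      have h3 := (qFact_pos hq s).ne'
      have h6 : qNat q (s + 1) ≠ 0 := (qNat_pos hq s).ne'
      have h8 : qNat q (j - s) ≠ 0 := by
        have := (qNat_pos hq (j - s - 1)).ne'
        rwa [show j - s - 1 + 1 = j - s by omega] at this
      rw [e3, e5]
      field_simp

lemma qPoch_succ (a q : ℝ) (n : ℕ) : qPoch a q (n + 1) = qPoch a q n * (1 - a * q ^ n) :=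
  Finset.prod_range_succ _ n

lemma qPoch_succ' (a q : ℝ) (n : ℕ) : qPoch a q (n + 1) = (1 - a) * qPoch (a * q) q n := by
  rw [qPoch, Finset.prod_range_succ']
  simp only [pow_zero, mul_one]
  rw [mul_comm]
  congr 1
  apply Finset.prod_congr rfl
  intro k _
  rw [pow_succ]
  ring_nf

lemma qPoch_pos {a q : ℝ} (ha : |a| < 1) (hq : |q| ≤ 1) (n : ℕ) : 0 < qPoch a q n := by
  apply Finset.prod_pos
  intro j _
  have : |a * q ^ j| < 1 := by
    rw [abs_mul, abs_pow]
    calc |a| * |q| ^ j ≤ |a| * 1 := by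
          apply mul_le_mul_of_nonneg_left _ (abs_nonneg a)
          exact pow_le_one₀ (abs_nonneg q) hq
    _ < 1 := by rwa [mul_one]
  have := (abs_lt.mp this).2
  linarith

lemma hermite_rec (q y : ℝ) (k : ℕ) :
    y * qHermite q k y = qHermite q (k + 1) y + qNat q k * qHermite q (k - 1) y := by
  cases k with
  | zero => simp [qHermite, qNat]
  | succ k =>
    rw [show k + 1 + 1 = k + 2 from rfl, show k + 1 - 1 = k from rfl]
    rw [show qHermite q (k + 2) y
        = y * qHermite q (k + 1) y - qNat q (k + 1) * qHermite q k y from rfl]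
    ring

set_option maxRecDepth 4000 in
lemma Pkey (q ρ x y : ℝ) (n : ℕ) :
    ((1 - ρ ^ 2) ^ 2 - ρ * (1 + ρ ^ 2) * (1 - q) * x * y + ρ ^ 2 * (1 - q) * (x ^ 2 + y ^ 2)) *
        ascP q y (ρ * q) n x =
      (1 - q) * ρ ^ 2 * ascP q y ρ (n + 2) x
        - (1 - q) * ρ * (1 - ρ ^ 2 * q ^ (n + 1)) * y * ascP q y ρ (n + 1) x
        + (1 - ρ ^ 2 * q ^ n) * (1 - ρ ^ 2 * q ^ (n + 1)) * ascP q y ρ n x := by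
  have e1 : qNat q 1 = 1 := by simp [qNat]
  have e2 : qNat q 2 = 1 + q := by
    rw [show (2:ℕ) = 1 + 1 from rfl, qNat_succ, e1]; norm_num
  induction n using Nat.twoStepInduction with
  | zero =>
    simp only [ascP, e1, pow_zero, pow_one]
    ring
  | one =>
    have a2 : ∀ ρ' : ℝ, ascP q y ρ' 2 x =
        (x - ρ' * y * q ^ 1) * (x - ρ' * y) - qNat q 1 * (1 - ρ' ^ 2 * q ^ 0) * 1 :=
      fun _ => rfl
    have a3 : ascP q y ρ 3 x = (x - ρ * y * q ^ 2) * ascP q y ρ 2 x -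
        qNat q 2 * (1 - ρ ^ 2 * q ^ 1) * ascP q y ρ 1 x := rfl
    rw [a3, a2, show ascP q y (ρ * q) 1 x = x - ρ * q * y from rfl,
      show ascP q y ρ 1 x = x - ρ * y from rfl, e1, e2]
    ring
  | more n ih0 ih1 =>
    have u2 : qNat q (n + 2) = qNat q (n + 1) + q ^ (n + 1) := qNat_succ q (n + 1)
    have u3 : qNat q (n + 3) = qNat q (n + 1) + q ^ (n + 1) + q ^ (n + 2) := by
      rw [qNat_succ q (n + 2), u2]
    simp only [ascP] at ih0
    simp only [ascP] at ih1
    simp only [ascP]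
    simp only [show n + 1 + 1 = n + 2 from rfl, show n + 2 + 1 = n + 3 from rfl] at ih1 ⊢
    rw [u2] at ih1
    rw [u2, u3]
    linear_combination (x - ρ * y * q ^ (n + 2)) * ih1
      - qNat q (n + 1) * (1 - ρ ^ 2 * q ^ (n + 2)) * ih0

lemma one_sub_sq_pow_pos {ρ q : ℝ} (hρ : |ρ| < 1) (hq : |q| ≤ 1) (n : ℕ) :
    0 < 1 - ρ ^ 2 * q ^ n := by
  have h1 : ρ ^ 2 * q ^ n ≤ |ρ ^ 2 * q ^ n| := le_abs_self _
  have h2 : |ρ ^ 2 * q ^ n| < 1 := by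
    rw [abs_mul, abs_pow, abs_pow, sq_abs]
    have ha : ρ ^ 2 < 1 := by
      have := abs_lt.mp hρ; nlinarith
    have hb : |q| ^ n ≤ 1 := pow_le_one₀ (abs_nonneg q) hq
    have hc : (0:ℝ) ≤ |q| ^ n := pow_nonneg (abs_nonneg q) n
    nlinarith [sq_nonneg ρ]
  linarith

lemma qPoch_shift2 (ρ q : ℝ) (n : ℕ) :
    qPoch (ρ ^ 2) q (n + 2) = (1 - ρ ^ 2) * (1 - ρ ^ 2 * q) * qPoch ((ρ * q) ^ 2) q n := by
  rw [show n + 2 = (n + 1) + 1 from rfl, qPoch_succ' (ρ ^ 2) q (n + 1), qPoch_succ']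
  rw [show ρ ^ 2 * q * q = (ρ * q) ^ 2 by ring]
  ring

set_option maxRecDepth 8000 in
set_option maxHeartbeats 1600000 in
lemma pkey_div {q ρ : ℝ} (hq : |q| < 1) (hρ : |ρ| < 1) (x y : ℝ) (n : ℕ) :
    ((1 - ρ ^ 2) ^ 2 - ρ * (1 + ρ ^ 2) * (1 - q) * x * y + ρ ^ 2 * (1 - q) * (x ^ 2 + y ^ 2)) *
        (ascP q y (ρ * q) n x / qPoch ((ρ * q) ^ 2) q n) =
      (1 - ρ ^ 2) * (1 - ρ ^ 2 * q) *
        ((1 - q) * ρ ^ 2 * (ascP q y ρ (n + 2) x / qPoch (ρ ^ 2) q (n + 2))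
          - (1 - q) * ρ * y * (ascP q y ρ (n + 1) x / qPoch (ρ ^ 2) q (n + 1))
          + ascP q y ρ n x / qPoch (ρ ^ 2) q n) := by
  have habs := abs_lt.mp hρ
  have hρ2 : |ρ ^ 2| < 1 := by
    rw [abs_pow, sq_abs]; nlinarith
  have hA : qPoch (ρ ^ 2) q n ≠ 0 := (qPoch_pos hρ2 hq.le n).ne'
  have hf1 : (1 : ℝ) - ρ ^ 2 * q ^ n ≠ 0 := (one_sub_sq_pow_pos hρ hq.le n).ne'
  have hf2 : (1 : ℝ) - ρ ^ 2 * q ^ (n + 1) ≠ 0 := (one_sub_sq_pow_pos hρ hq.le (n + 1)).ne'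
  have hf3 : (1 : ℝ) - ρ ^ 2 ≠ 0 := by
    have := one_sub_sq_pow_pos hρ hq.le 0; simpa using this.ne'
  have hf4 : (1 : ℝ) - ρ ^ 2 * q ≠ 0 := by
    have := one_sub_sq_pow_pos hρ hq.le 1; simpa using this.ne'
  have e1 : qPoch (ρ ^ 2) q (n + 1) = qPoch (ρ ^ 2) q n * (1 - ρ ^ 2 * q ^ n) :=
    qPoch_succ _ _ n
  have e2 : qPoch (ρ ^ 2) q (n + 2) =
      qPoch (ρ ^ 2) q n * (1 - ρ ^ 2 * q ^ n) * (1 - ρ ^ 2 * q ^ (n + 1)) := by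
    rw [qPoch_succ _ _ (n + 1), e1]
  have hρq2 : |(ρ * q) ^ 2| < 1 := by
    rw [abs_pow, abs_mul]
    have h1 : |ρ| * |q| < 1 := by nlinarith [abs_nonneg ρ, abs_nonneg q]
    exact pow_lt_one₀ (by positivity) h1 (by norm_num)
  have hB : qPoch ((ρ * q) ^ 2) q n ≠ 0 := (qPoch_pos hρq2 hq.le n).ne'
  have e3 : (1 - ρ ^ 2) * (1 - ρ ^ 2 * q) * qPoch ((ρ * q) ^ 2) q n =
      qPoch (ρ ^ 2) q n * (1 - ρ ^ 2 * q ^ n) * (1 - ρ ^ 2 * q ^ (n + 1)) := by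
    rw [← qPoch_shift2, e2]
  have hP := Pkey q ρ x y n
  rw [e1, e2]
  set W := (1 - ρ ^ 2) ^ 2 - ρ * (1 + ρ ^ 2) * (1 - q) * x * y + ρ ^ 2 * (1 - q) * (x ^ 2 + y ^ 2)
    with hW
  set b0 := ascP q y (ρ * q) n x with hb0
  set a0 := ascP q y ρ n x with ha0
  set a1 := ascP q y ρ (n + 1) x with ha1
  set a2 := ascP q y ρ (n + 2) x with ha2
  set A := qPoch (ρ ^ 2) q n with hAd
  set B := qPoch ((ρ * q) ^ 2) q n with hBd
  set f1 := 1 - ρ ^ 2 * q ^ n with hfd1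
  set f2 := 1 - ρ ^ 2 * q ^ (n + 1) with hfd2
  have h : W * b0 * (A * f1 * f2)
      = (1 - ρ ^ 2) * (1 - ρ ^ 2 * q) *
        ((1 - q) * ρ ^ 2 * a2 - (1 - q) * ρ * y * a1 * f2 + a0 * (f1 * f2)) * B := by
    linear_combination (A * f1 * f2) * hP -
      ((1 - q) * ρ ^ 2 * a2 - (1 - q) * ρ * y * a1 * f2 + a0 * (f1 * f2)) * e3
  rw [mul_div_assoc', div_eq_iff hB]
  rw [show (1 - ρ ^ 2) * (1 - ρ ^ 2 * q) *
        ((1 - q) * ρ ^ 2 * (a2 / (A * f1 * f2)) - (1 - q) * ρ * y * (a1 / (A * f1)) + a0 / A)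
      = ((1 - ρ ^ 2) * (1 - ρ ^ 2 * q) *
        ((1 - q) * ρ ^ 2 * a2 - (1 - q) * ρ * y * a1 * f2 + a0 * (f1 * f2))) / (A * f1 * f2) by
    field_simp]
  rw [div_mul_eq_mul_div, eq_div_iff (by exact mul_ne_zero (mul_ne_zero hA hf1) hf2)]
  linear_combination h

lemma tri (s : ℕ) : (s + 1) * ((s + 1) - 1) / 2 = s * (s - 1) / 2 + s := by
  rcases s with _ | t
  · rfl
  · have h : (t + 1 + 1) * ((t + 1 + 1) - 1) = (t + 1) * ((t + 1) - 1) + 2 * (t + 1) := by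
      simp only [Nat.add_sub_cancel]
      ring
    rw [h, Nat.add_mul_div_left _ _ (by norm_num : 0 < 2)]

/-- telescoping helper -/
def Fx (q ρ : ℝ) (i j : ℕ) (p h : ℕ → ℝ) (s : ℕ) : ℝ :=
  -((1 - q) * ρ * ((-1 : ℝ) ^ s * q ^ (s * (s - 1) / 2) * qBinom q j s * ρ ^ s) * q ^ s *
      h (j + 1 - s) * p (i + 1 + s))
    - (1 - q) * qNat q s * ((-1 : ℝ) ^ s * q ^ (s * (s - 1) / 2) * qBinom q j s * ρ ^ s) *
      h (j - s) * p (i + s)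
    + (1 - q) * ρ * ((-1 : ℝ) ^ s * q ^ (s * (s - 1) / 2) * qBinom q (j + 1) s * ρ ^ s) *
      h (j + 1 - s) * p (i + 1 + s)

lemma L9core {q ρ y : ℝ} (hq : |q| < 1) (i j : ℕ) (p h : ℕ → ℝ)
    (Hrec : ∀ k, y * h k = h (k + 1) + qNat q k * h (k - 1)) :
    ∑ s ∈ Finset.range (j + 2),
      ((-1 : ℝ) ^ s * q ^ (s * (s - 1) / 2) * qBinom q j s * ρ ^ s * q ^ s * h (j - s) *
        ((1 - q) * ρ ^ 2 * p (i + s + 2) - (1 - q) * ρ * y * p (i + s + 1) + p (i + s))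
      - ((-1 : ℝ) ^ s * q ^ (s * (s - 1) / 2) * qBinom q j s * ρ ^ s * h (j - s) * p (i + s)
        - (1 - q) * ρ * ((-1 : ℝ) ^ s * q ^ (s * (s - 1) / 2) * qBinom q (j + 1) s * ρ ^ s *
            h (j + 1 - s) * p (i + 1 + s)))) = 0 := by
  have key : ∀ s ∈ Finset.range (j + 2),
      ((-1 : ℝ) ^ s * q ^ (s * (s - 1) / 2) * qBinom q j s * ρ ^ s * q ^ s * h (j - s) *
        ((1 - q) * ρ ^ 2 * p (i + s + 2) - (1 - q) * ρ * y * p (i + s + 1) + p (i + s))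
      - ((-1 : ℝ) ^ s * q ^ (s * (s - 1) / 2) * qBinom q j s * ρ ^ s * h (j - s) * p (i + s)
        - (1 - q) * ρ * ((-1 : ℝ) ^ s * q ^ (s * (s - 1) / 2) * qBinom q (j + 1) s * ρ ^ s *
            h (j + 1 - s) * p (i + 1 + s))))
      = Fx q ρ i j p h s - Fx q ρ i j p h (s + 1) := by
    intro s hs
    rw [Finset.mem_range] at hs
    rcases le_or_gt s j with hsj | hsj
    · -- main case s ≤ j
      have hr := Hrec (j - s)
      rw [show j - s + 1 = j + 1 - s by omega] at hr
      have hP := qPascal hq j s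
      have hm := qBinom_mul hq j s
      have hg := one_sub_mul_qNat q s
      simp only [Fx]
      rw [show j + 1 - (s + 1) = j - s by omega, show j - (s + 1) = j - s - 1 by omega,
        show i + 1 + (s + 1) = i + s + 2 by omega, show i + (s + 1) = i + s + 1 by omega,
        tri s, pow_add, show i + 1 + s = i + s + 1 by omega]
      rw [hP]
      linear_combination
        (-((1 : ℝ)- q) * ρ * ((-1 : ℝ) ^ s * q ^ (s * (s - 1) / 2) * qBinom q j s * ρ ^ s) *
          q ^ s * p (i + s + 1)) * hr
        + ((1 - q) * (-1 : ℝ) ^ s * q ^ (s * (s - 1) / 2) * q ^ s * ρ ^ s * ρ *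
          h (j - s - 1) * p (i + s + 1)) * hm
        + (((-1 : ℝ) ^ s * q ^ (s * (s - 1) / 2) * qBinom q j s * ρ ^ s) * h (j - s) *
          p (i + s)) * hg
    · -- edge case s = j + 1
      have hs' : s = j + 1 := by omega
      subst hs'
      simp only [Fx]
      rw [qBinom_overflow q (show j < j + 1 by omega),
        qBinom_overflow q (show j < j + 1 + 1 by omega),
        qBinom_overflow q (show j + 1 < j + 1 + 1 by omega)]
      ring
  rw [Finset.sum_congr rfl key, Finset.sum_range_sub' (Fx q ρ i j p h) (j + 2)]
  simp only [Fx]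
  rw [qBinom_zero hq j, qBinom_zero hq (j + 1),
    qBinom_overflow q (show j < j + 2 by omega),
    qBinom_overflow q (show j + 1 < j + 2 by omega)]
  simp [qNat]

lemma Qpoly_ext {q : ℝ} (hq : |q| < 1) (ρ' : ℝ) (i j : ℕ) (x y : ℝ) :
    Qpoly q ρ' i j x y = ∑ s ∈ Finset.range (j + 2),
      (-1 : ℝ) ^ s * q ^ (s * (s - 1) / 2) * qBinom q j s * ρ' ^ s * qHermite q (j - s) y *
        ascP q y ρ' (i + s) x / qPoch (ρ' ^ 2) q (i + s) := by
  rw [Qpoly, Finset.sum_range_succ _ (j + 1), qBinom_overflow q (Nat.lt_succ_self j)]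
  simp

set_option maxHeartbeats 1600000 in
lemma keyQ {q ρ : ℝ} (hq : |q| < 1) (hρ : |ρ| < 1) (i j : ℕ) (x y : ℝ) :
    ((1 - ρ ^ 2) ^ 2 - ρ * (1 + ρ ^ 2) * (1 - q) * x * y + ρ ^ 2 * (1 - q) * (x ^ 2 + y ^ 2)) *
        Qpoly q (ρ * q) i j x y
      = (1 - ρ ^ 2) * (1 - ρ ^ 2 * q) *
          (Qpoly q ρ i j x y - (1 - q) * ρ * Qpoly q ρ (i + 1) (j + 1) x y) := by
  have hQ3 : Qpoly q ρ (i + 1) (j + 1) x y = ∑ s ∈ Finset.range (j + 2),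
      (-1 : ℝ) ^ s * q ^ (s * (s - 1) / 2) * qBinom q (j + 1) s * ρ ^ s *
        qHermite q (j + 1 - s) y * ascP q y ρ (i + 1 + s) x / qPoch (ρ ^ 2) q (i + 1 + s) := by
    rw [Qpoly]
  have main : ∑ s ∈ Finset.range (j + 2),
      (((1 - ρ ^ 2) ^ 2 - ρ * (1 + ρ ^ 2) * (1 - q) * x * y + ρ ^ 2 * (1 - q) * (x ^ 2 + y ^ 2)) *
        ((-1 : ℝ) ^ s * q ^ (s * (s - 1) / 2) * qBinom q j s * (ρ * q) ^ s *
          qHermite q (j - s) y * ascP q y (ρ * q) (i + s) x / qPoch ((ρ * q) ^ 2) q (i + s))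
      - (1 - ρ ^ 2) * (1 - ρ ^ 2 * q) *
        ((-1 : ℝ) ^ s * q ^ (s * (s - 1) / 2) * qBinom q j s * ρ ^ s * qHermite q (j - s) y *
          ascP q y ρ (i + s) x / qPoch (ρ ^ 2) q (i + s))
      + ((1 - ρ ^ 2) * (1 - ρ ^ 2 * q) * ((1 - q) * ρ)) *
        ((-1 : ℝ) ^ s * q ^ (s * (s - 1) / 2) * qBinom q (j + 1) s * ρ ^ s *
          qHermite q (j + 1 - s) y * ascP q y ρ (i + 1 + s) x / qPoch (ρ ^ 2) q (i + 1 + s)))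
      = 0 := by
    have key2 : ∀ s ∈ Finset.range (j + 2),
        (((1 - ρ ^ 2) ^ 2 - ρ * (1 + ρ ^ 2) * (1 - q) * x * y + ρ ^ 2 * (1 - q) * (x ^ 2 + y ^ 2)) *
          ((-1 : ℝ) ^ s * q ^ (s * (s - 1) / 2) * qBinom q j s * (ρ * q) ^ s *
            qHermite q (j - s) y * ascP q y (ρ * q) (i + s) x / qPoch ((ρ * q) ^ 2) q (i + s))
        - (1 - ρ ^ 2) * (1 - ρ ^ 2 * q) *
          ((-1 : ℝ) ^ s * q ^ (s * (s - 1) / 2) * qBinom q j s * ρ ^ s * qHermite q (j - s) y *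
            ascP q y ρ (i + s) x / qPoch (ρ ^ 2) q (i + s))
        + ((1 - ρ ^ 2) * (1 - ρ ^ 2 * q) * ((1 - q) * ρ)) *
          ((-1 : ℝ) ^ s * q ^ (s * (s - 1) / 2) * qBinom q (j + 1) s * ρ ^ s *
            qHermite q (j + 1 - s) y * ascP q y ρ (i + 1 + s) x / qPoch (ρ ^ 2) q (i + 1 + s)))
        = (1 - ρ ^ 2) * (1 - ρ ^ 2 * q) *
          ((-1 : ℝ) ^ s * q ^ (s * (s - 1) / 2) * qBinom q j s * ρ ^ s * q ^ s *
            qHermite q (j - s) y *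
            ((1 - q) * ρ ^ 2 *
                (ascP q y ρ (i + s + 2) x / qPoch (ρ ^ 2) q (i + s + 2))
              - (1 - q) * ρ * y * (ascP q y ρ (i + s + 1) x / qPoch (ρ ^ 2) q (i + s + 1))
              + ascP q y ρ (i + s) x / qPoch (ρ ^ 2) q (i + s))
          - ((-1 : ℝ) ^ s * q ^ (s * (s - 1) / 2) * qBinom q j s * ρ ^ s * qHermite q (j - s) y *
              (ascP q y ρ (i + s) x / qPoch (ρ ^ 2) q (i + s))
            - (1 - q) * ρ * ((-1 : ℝ) ^ s * q ^ (s * (s - 1) / 2) * qBinom q (j + 1) s * ρ ^ s *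
                qHermite q (j + 1 - s) y *
                (ascP q y ρ (i + 1 + s) x / qPoch (ρ ^ 2) q (i + 1 + s))))) := by
      intro s _
      have pd := pkey_div hq hρ x y (i + s)
      linear_combination
        ((-1 : ℝ) ^ s * q ^ (s * (s - 1) / 2) * qBinom q j s * ρ ^ s * q ^ s *
          qHermite q (j - s) y) * pd
    rw [Finset.sum_congr rfl key2, ← Finset.mul_sum]
    exact mul_eq_zero_of_right _
      (L9core hq i j (fun n => ascP q y ρ n x / qPoch (ρ ^ 2) q n)
        (fun k => qHermite q k y) (fun k => hermite_rec q y k))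
  rw [Qpoly_ext hq (ρ * q) i j x y, Qpoly_ext hq ρ i j x y, hQ3]
  rw [Finset.sum_add_distrib, Finset.sum_sub_distrib, ← Finset.mul_sum, ← Finset.mul_sum,
    ← Finset.mul_sum] at main
  linear_combination main

lemma omega_eq {q : ℝ} (hq : |q| < 1) (ρ x y : ℝ) :
    omegaPM (x * Real.sqrt (1 - q) / 2) (y * Real.sqrt (1 - q) / 2) ρ
      = (1 - ρ ^ 2) ^ 2 - ρ * (1 + ρ ^ 2) * (1 - q) * x * y
        + ρ ^ 2 * (1 - q) * (x ^ 2 + y ^ 2) := by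
  have h : Real.sqrt (1 - q) ^ 2 = 1 - q :=
    Real.sq_sqrt (by linarith [(abs_lt.mp hq).2])
  simp only [omegaPM]
  linear_combination (ρ ^ 2 * (x ^ 2 + y ^ 2) - ρ * (1 + ρ ^ 2) * x * y) * h

/-- telescoping helper for the induction on m -/
def Fy (q ρ : ℝ) (m : ℕ) (Qp : ℕ → ℝ) (k : ℕ) : ℝ :=
  ((-1 : ℝ) ^ k * qBinom q m k * q ^ (k * (k - 1) / 2) * (1 - q) ^ k * (ρ * q) ^ k
    - (-1 : ℝ) ^ k * qBinom q (m + 1) k * q ^ (k * (k - 1) / 2) * (1 - q) ^ k * ρ ^ k) * Qp k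

lemma stepSum {q ρ : ℝ} (hq : |q| < 1) (m : ℕ) (Qp : ℕ → ℝ) :
    ∑ k ∈ Finset.range (m + 1),
      (-1 : ℝ) ^ k * qBinom q m k * q ^ (k * (k - 1) / 2) * (1 - q) ^ k * (ρ * q) ^ k *
        (Qp k - (1 - q) * ρ * Qp (k + 1))
    = ∑ k ∈ Finset.range (m + 1 + 1),
        (-1 : ℝ) ^ k * qBinom q (m + 1) k * q ^ (k * (k - 1) / 2) * (1 - q) ^ k * ρ ^ k *
          Qp k := by
  have ext : ∑ k ∈ Finset.range (m + 1),
      (-1 : ℝ) ^ k * qBinom q m k * q ^ (k * (k - 1) / 2) * (1 - q) ^ k * (ρ * q) ^ k *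
        (Qp k - (1 - q) * ρ * Qp (k + 1))
      = ∑ k ∈ Finset.range (m + 1 + 1),
        (-1 : ℝ) ^ k * qBinom q m k * q ^ (k * (k - 1) / 2) * (1 - q) ^ k * (ρ * q) ^ k *
          (Qp k - (1 - q) * ρ * Qp (k + 1)) := by
    rw [Finset.sum_range_succ _ (m + 1), qBinom_overflow q (Nat.lt_succ_self m)]
    simp
  rw [ext, ← sub_eq_zero, ← Finset.sum_sub_distrib]
  have key : ∀ k ∈ Finset.range (m + 1 + 1),
      ((-1 : ℝ) ^ k * qBinom q m k * q ^ (k * (k - 1) / 2) * (1 - q) ^ k * (ρ * q) ^ k *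
        (Qp k - (1 - q) * ρ * Qp (k + 1))
      - (-1 : ℝ) ^ k * qBinom q (m + 1) k * q ^ (k * (k - 1) / 2) * (1 - q) ^ k * ρ ^ k * Qp k)
      = Fy q ρ m Qp k - Fy q ρ m Qp (k + 1) := by
    intro k _
    have hP := qPascal hq m k
    simp only [Fy]
    rw [tri k, pow_add, hP]
    ring
  rw [Finset.sum_congr rfl key, Finset.sum_range_sub' (Fy q ρ m Qp) (m + 1 + 1)]
  simp only [Fy]
  rw [qBinom_zero hq m, qBinom_zero hq (m + 1),
    qBinom_overflow q (show m < m + 1 + 1 by omega),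
    qBinom_overflow q (show m + 1 < m + 1 + 1 by omega)]
  ring


/-- Q_{i,j}(x,y|ρ q^m,q) ∏_{r=0}^{m-1} ω = (ρ²;q)_{2m} Σ_{k=0}^m ... -/
theorem statement10 (q ρ : ℝ) (hq : |q| < 1) (hρ : |ρ| < 1) (i j m : ℕ) (x y : ℝ) :
    Qpoly q (ρ * q ^ m) i j x y *
        ∏ r ∈ Finset.range m,
          omegaPM (x * Real.sqrt (1 - q) / 2) (y * Real.sqrt (1 - q) / 2) (ρ * q ^ r) =
      qPoch (ρ ^ 2) q (2 * m) *
        ∑ k ∈ Finset.range (m + 1),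
          (-1 : ℝ) ^ k * qBinom q m k * q ^ (k * (k - 1) / 2) * (1 - q) ^ k * ρ ^ k *
            Qpoly q ρ (i + k) (j + k) x y := by
  induction m generalizing ρ hρ with
  | zero =>
    simp only [pow_zero, mul_one, Finset.prod_range_zero, zero_add, Finset.sum_range_one,
      Nat.mul_zero, Nat.add_zero]
    rw [qBinom_zero hq 0]
    norm_num [qPoch]
  | succ m IH =>
    have hρq : |ρ * q| < 1 := by
      rw [abs_mul]
      have h1 := mul_le_of_le_one_right (abs_nonneg ρ) hq.le
      linarith
    rw [Finset.prod_range_succ']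
    rw [show ρ * q ^ 0 = ρ * 1 from rfl, mul_one]
    have prodeq : (∏ r ∈ Finset.range m,
          omegaPM (x * Real.sqrt (1 - q) / 2) (y * Real.sqrt (1 - q) / 2) (ρ * q ^ (r + 1)))
        = ∏ r ∈ Finset.range m,
          omegaPM (x * Real.sqrt (1 - q) / 2) (y * Real.sqrt (1 - q) / 2) (ρ * q * q ^ r) :=
      Finset.prod_congr rfl (fun r _ => by rw [show ρ * q ^ (r + 1) = ρ * q * q ^ r by
        rw [pow_succ]; ring])
    rw [prodeq, show ρ * q ^ (m + 1) = ρ * q * q ^ m by rw [pow_succ]; ring]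
    rw [← mul_assoc]
    rw [IH (ρ * q) hρq]
    rw [omega_eq hq ρ x y]
    rw [show 2 * (m + 1) = 2 * m + 2 by ring, qPoch_shift2 ρ q (2 * m)]
    have ss := stepSum (ρ := ρ) hq m (fun n => Qpoly q ρ (i + n) (j + n) x y)
    beta_reduce at ss
    have keyk : ∀ k ∈ Finset.range (m + 1),
        ((-1 : ℝ) ^ k * qBinom q m k * q ^ (k * (k - 1) / 2) * (1 - q) ^ k * (ρ * q) ^ k *
          Qpoly q (ρ * q) (i + k) (j + k) x y) *
          ((1 - ρ ^ 2) ^ 2 - ρ * (1 + ρ ^ 2) * (1 - q) * x * y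
            + ρ ^ 2 * (1 - q) * (x ^ 2 + y ^ 2))
        = (1 - ρ ^ 2) * (1 - ρ ^ 2 * q) *
            ((-1 : ℝ) ^ k * qBinom q m k * q ^ (k * (k - 1) / 2) * (1 - q) ^ k * (ρ * q) ^ k *
              (Qpoly q ρ (i + k) (j + k) x y
                - (1 - q) * ρ * Qpoly q ρ (i + (k + 1)) (j + (k + 1)) x y)) := by
      intro k _
      have kq := keyQ hq hρ (i + k) (j + k) x y
      rw [show i + k + 1 = i + (k + 1) by omega, show j + k + 1 = j + (k + 1) by omega] at kq
      linear_combination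
        ((-1 : ℝ) ^ k * qBinom q m k * q ^ (k * (k - 1) / 2) * (1 - q) ^ k * (ρ * q) ^ k) * kq
    have hsum : (∑ k ∈ Finset.range (m + 1),
          (-1 : ℝ) ^ k * qBinom q m k * q ^ (k * (k - 1) / 2) * (1 - q) ^ k * (ρ * q) ^ k *
            Qpoly q (ρ * q) (i + k) (j + k) x y) *
          ((1 - ρ ^ 2) ^ 2 - ρ * (1 + ρ ^ 2) * (1 - q) * x * y
            + ρ ^ 2 * (1 - q) * (x ^ 2 + y ^ 2))
        = (1 - ρ ^ 2) * (1 - ρ ^ 2 * q) *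
          ∑ k ∈ Finset.range (m + 1 + 1),
            (-1 : ℝ) ^ k * qBinom q (m + 1) k * q ^ (k * (k - 1) / 2) * (1 - q) ^ k * ρ ^ k *
              Qpoly q ρ (i + k) (j + k) x y := by
      rw [Finset.sum_mul, Finset.sum_congr rfl keyk, ← Finset.mul_sum, ss]
    linear_combination (qPoch ((ρ * q) ^ 2) q (2 * m)) * hsum
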